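/- Let p and q be distinct odd primes and let A be a finite abelian group of order pq. Then there exist at most nine isomorphism classes of quadratic forms on A: there are quadratic forms Q_1, …, Q_9 on A such that every quadratic form on A is isomorphic to some Q_i. -/

import Mathlib

/-- The map `ℚ/ℤ → ℚ/2ℤ` induced by multiplication by `2`. -/
def QZtoQ2Z : AddCircle (1 : ℚ) →+ AddCircle (2 : ℚ) :=
  QuotientAddGroup.map (AddSubgroup.zmultiples (1 : ℚ)) (AddSubgroup.zmultiples (2 : ℚ))
    (AddMonoidHom.mk' (fun q : ℚ => 2 * q) (fun a b => by ring))
    (by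
      intro x hx
      obtain ⟨k, hk⟩ := AddSubgroup.mem_zmultiples_iff.mp hx
      rw [AddSubgroup.mem_comap]
      exact AddSubgroup.mem_zmultiples_iff.mpr
        ⟨k, by simp only [AddMonoidHom.mk'_apply, ← hk, zsmul_eq_mul]; ring⟩)

/-- A quadratic form on a finite abelian group `A`: a function `Q : A → ℚ/2ℤ` with
`Q (n • a) = n² • Q a` for which there is a symmetric biadditive `B : A × A → ℚ/ℤ`
with `Q (a + b) = Q a + Q b + 2·B a b`. -/
def IsQuadraticForm {A : Type} [AddCommGroup A] (Q : A → AddCircle (2 : ℚ)) : Prop :=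
  (∀ (n : ℤ) (a : A), Q (n • a) = (n ^ 2) • Q a) ∧
  ∃ B : A → A → AddCircle (1 : ℚ),
    (∀ a b : A, B a b = B b a) ∧
    (∀ a b c : A, B (a + b) c = B a c + B b c) ∧
    (∀ a b : A, Q (a + b) = Q a + Q b + QZtoQ2Z (B a b))


lemma addCircle_eq_iff (p x y : ℚ) :
    (x : AddCircle p) = y ↔ ∃ k : ℤ, x - y = k • p := by
  rw [← sub_eq_zero, ← AddCircle.coe_sub, AddCircle.coe_eq_zero_iff]
  exact ⟨fun ⟨k, hk⟩ => ⟨k, hk.symm⟩, fun ⟨k, hk⟩ => ⟨k, hk.symm⟩⟩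

lemma zmod_dvd {n : ℕ} (a b : ℤ) (h : (a : ZMod n) = (b : ZMod n)) : (n : ℤ) ∣ a - b :=
  Int.ModEq.dvd ((ZMod.intCast_eq_intCast_iff a b n).mp h).symm

/-- helper: congruent integers give the same element `2a/n` of `ℚ/2ℤ`. -/
lemma coe2_congr {n : ℕ} (hn : n ≠ 0) (a b : ℤ) (h : (a : ZMod n) = (b : ZMod n)) :
    ((2 * a / n : ℚ) : AddCircle (2:ℚ)) = ((2 * b / n : ℚ) : AddCircle (2:ℚ)) := by
  obtain ⟨k, hk⟩ := zmod_dvd a b h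
  rw [addCircle_eq_iff]
  refine ⟨k, ?_⟩
  have hn' : (n : ℚ) ≠ 0 := Nat.cast_ne_zero.mpr hn
  field_simp
  push_cast
  have : (a : ℚ) - b = n * k := by exact_mod_cast congrArg (Int.cast : ℤ → ℚ) hk
  rw [zsmul_eq_mul]
  nlinarith [this]

/-- helper: congruent integers give the same element `a/n` of `ℚ/ℤ`. -/
lemma coe1_congr {n : ℕ} (hn : n ≠ 0) (a b : ℤ) (h : (a : ZMod n) = (b : ZMod n)) :
    ((a / n : ℚ) : AddCircle (1:ℚ)) = ((b / n : ℚ) : AddCircle (1:ℚ)) := by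
  obtain ⟨k, hk⟩ := zmod_dvd a b h
  rw [addCircle_eq_iff]
  refine ⟨k, ?_⟩
  have hn' : (n : ℚ) ≠ 0 := Nat.cast_ne_zero.mpr hn
  have : (a : ℚ) - b = n * k := by exact_mod_cast congrArg (Int.cast : ℤ → ℚ) hk
  field_simp
  rw [zsmul_eq_mul]
  linarith [this]

lemma QZtoQ2Z_coe (r : ℚ) : QZtoQ2Z ((r : AddCircle (1:ℚ))) = ((2 * r : ℚ) : AddCircle (2:ℚ)) := rfl

lemma key2 {n : ℕ} [NeZero n] (x y : ℚ) (a b : ℤ) (hx : x = 2 * a / n) (hy : y = 2 * b / n)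
    (h : (a : ZMod n) = (b : ZMod n)) : (↑x : AddCircle (2:ℚ)) = ↑y := by
  obtain ⟨k, hk⟩ := zmod_dvd a b h
  rw [addCircle_eq_iff]
  refine ⟨k, ?_⟩
  have hn' : (n : ℚ) ≠ 0 := Nat.cast_ne_zero.mpr (NeZero.ne n)
  have hd : (a : ℚ) - b = n * k := by exact_mod_cast congrArg (Int.cast : ℤ → ℚ) hk
  rw [hx, hy, zsmul_eq_mul]
  field_simp
  linarith [hd]

lemma key1 {n : ℕ} [NeZero n] (x y : ℚ) (a b : ℤ) (hx : x = a / n) (hy : y = b / n)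
    (h : (a : ZMod n) = (b : ZMod n)) : (↑x : AddCircle (1:ℚ)) = ↑y := by
  obtain ⟨k, hk⟩ := zmod_dvd a b h
  rw [addCircle_eq_iff]
  refine ⟨k, ?_⟩
  have hn' : (n : ℚ) ≠ 0 := Nat.cast_ne_zero.mpr (NeZero.ne n)
  have hd : (a : ℚ) - b = n * k := by exact_mod_cast congrArg (Int.cast : ℤ → ℚ) hk
  rw [hx, hy, zsmul_eq_mul, mul_one]
  field_simp
  linarith [hd]

/-- The standard quadratic form `x ↦ 2 c x² / n` on `ZMod n`. -/
noncomputable def qcf (n : ℕ) (c : ZMod n) : ZMod n → AddCircle (2:ℚ) :=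
  fun x => ((2 * ((c.val * x.val ^ 2 : ℤ) : ℚ) / n : ℚ) : AddCircle (2:ℚ))

lemma isQuadraticForm_qcf (n : ℕ) [NeZero n] (c : ZMod n) : IsQuadraticForm (qcf n c) := by
  constructor
  · intro m a
    show _ = (m^2 : ℤ) • (((2 * ((c.val * a.val ^ 2 : ℤ) : ℚ) / n : ℚ)) : AddCircle (2:ℚ))
    rw [← AddCircle.coe_zsmul]
    refine key2 _ _ (c.val * ((m • a).val) ^ 2) (m ^ 2 * (c.val * a.val ^ 2)) rfl
      (by push_cast [zsmul_eq_mul]; ring) ?_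
    push_cast [ZMod.natCast_val, ZMod.cast_id, zsmul_eq_mul]
    ring
  · refine ⟨fun x y => (((((2 * (x.val * y.val * c.val) : ℤ)) : ℚ) / n : ℚ) : AddCircle (1:ℚ)),
      ?_, ?_, ?_⟩
    · intro a b
      refine key1 _ _ (2*(a.val * b.val * c.val)) (2*(b.val * a.val * c.val)) rfl rfl ?_
      push_cast
      ring
    · intro a b d
      show _ = ((((((2 * (a.val * d.val * c.val) : ℤ)) : ℚ) / n) + ((((2 * (b.val * d.val * c.val) : ℤ)) : ℚ) / n) : ℚ) : AddCircle (1:ℚ))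
      refine key1 _ _ (2*((a+b).val * d.val * c.val)) (2*(a.val * d.val * c.val) + 2*(b.val * d.val * c.val)) rfl
        (by push_cast; ring) ?_
      push_cast [ZMod.natCast_val, ZMod.cast_id]
      ring
    · intro a b
      show _ = (((2 * ((c.val * a.val ^ 2 : ℤ) : ℚ) / n) + (2 * ((c.val * b.val ^ 2 : ℤ) : ℚ) / n)
          + (2 * ((((2 * (a.val * b.val * c.val) : ℤ)) : ℚ) / n)) : ℚ) : AddCircle (2:ℚ))
      refine key2 _ _ (c.val * ((a+b).val) ^ 2)
        (c.val * a.val ^ 2 + c.val * b.val ^ 2 + 2 * (a.val * b.val * c.val)) rfl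
        (by push_cast; ring) ?_
      push_cast [ZMod.natCast_val, ZMod.cast_id]
      ring

/-- Multiplying the variable by a unit changes `c` by the square of the unit. -/
lemma qcf_unit_mul (n : ℕ) [NeZero n] (c : ZMod n) (u : (ZMod n)ˣ) (x : ZMod n) :
    qcf n c ((u : ZMod n) * x) = qcf n (c * (u:ZMod n)^2) x := by
  refine key2 _ _ (c.val * (((u : ZMod n) * x).val) ^ 2) ((c * (u:ZMod n)^2).val * x.val ^ 2)
    rfl rfl ?_
  push_cast [ZMod.natCast_val, ZMod.cast_id]
  ring

lemma qf_classify (n : ℕ) [NeZero n] (hodd : Odd n) (Q : ZMod n → AddCircle (2:ℚ))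
    (hQ : IsQuadraticForm Q) : ∃ c : ZMod n, ∀ x, Q x = qcf n c x := by
  have hn0 : (n : ℚ) ≠ 0 := Nat.cast_ne_zero.mpr (NeZero.ne n)
  obtain ⟨hhom, B, hsymm, hadd, hpol⟩ := hQ
  have h1 : ∀ x : ZMod n, Q x = ((x.val : ℤ)^2) • Q 1 := by
    intro x
    have hx1 : ((x.val : ℤ)) • (1 : ZMod n) = x := by
      rw [zsmul_eq_mul, mul_one]
      push_cast [ZMod.natCast_val, ZMod.cast_id]
      rfl
    rw [← hx1, hhom, hx1]
  have hQ0 : Q 0 = 0 := by simpa using hhom 0 0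
  have hone : ((n:ℤ)) • (1 : ZMod n) = 0 := by
    rw [zsmul_eq_mul, mul_one]
    push_cast [ZMod.natCast_self]
    rfl
  have hn2 : ((n:ℤ)^2) • Q 1 = 0 := by
    have h := hhom (n : ℤ) 1
    rw [hone, hQ0] at h
    exact h.symm
  set f : ZMod n →+ AddCircle (1:ℚ) := AddMonoidHom.mk' (fun a => B a 1) (fun a b => hadd a b 1)
    with hf
  have hnb : (n:ℤ) • B 1 1 = 0 := by
    calc (n:ℤ) • B 1 1 = (n:ℤ) • f 1 := rfl
      _ = f (((n:ℤ)) • 1) := (map_zsmul f _ _).symm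
      _ = f 0 := by rw [hone]
      _ = 0 := map_zero f
  have h2t : QZtoQ2Z (B 1 1) = (2:ℤ) • Q 1 := by
    have h4 := hhom (2 : ℤ) 1
    have h21 : ((2:ℤ)) • (1 : ZMod n) = 1 + 1 := by
      rw [zsmul_eq_mul, mul_one]; norm_num
    rw [h21, hpol 1 1] at h4
    have e : QZtoQ2Z (B 1 1) = ((2:ℤ)^2) • Q 1 - Q 1 - Q 1 := by rw [← h4]; abel
    rw [e, show ((2:ℤ)^2) = (4:ℤ) from by norm_num]
    abel
  -- representative of B 1 1
  obtain ⟨r, hr⟩ : ∃ r : ℚ, ((r : AddCircle (1:ℚ))) = B 1 1 := Quotient.exists_rep _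
  obtain ⟨k, hk⟩ : ∃ k : ℤ, (n:ℚ) * r = k := by
    rw [← hr, ← AddCircle.coe_zsmul] at hnb
    obtain ⟨k, hk⟩ := (AddCircle.coe_eq_zero_iff _).mp hnb
    refine ⟨k, ?_⟩
    push_cast [zsmul_eq_mul] at hk
    linarith
  have hrk : r = k / n := by field_simp; linarith
  -- representative of Q 1
  obtain ⟨s, hs⟩ : ∃ s : ℚ, ((s : AddCircle (2:ℚ))) = Q 1 := Quotient.exists_rep _
  obtain ⟨m, hm⟩ : ∃ m : ℤ, s = k / n + m := by
    have : ((2 * r : ℚ) : AddCircle (2:ℚ)) = ((2 * s : ℚ) : AddCircle (2:ℚ)) := by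
      rw [show ((2 * s : ℚ) : AddCircle (2:ℚ)) = (2:ℤ) • (s : AddCircle (2:ℚ)) from by
        rw [← AddCircle.coe_zsmul]; push_cast [zsmul_eq_mul]; ring_nf, hs]
      rw [← h2t, ← hr, QZtoQ2Z_coe]
    obtain ⟨m, hm⟩ := (addCircle_eq_iff _ _ _).mp this
    refine ⟨-m, ?_⟩
    rw [← hrk]
    have : (2:ℚ) * r - 2 * s = m * 2 := by rw [hm]; push_cast [zsmul_eq_mul]; ring
    push_cast
    linarith
  -- parity from n² • Q 1 = 0
  obtain ⟨c0, hc0⟩ : ∃ c0 : ℤ, k + n * m = 2 * c0 := by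
    rw [← hs, ← AddCircle.coe_zsmul] at hn2
    obtain ⟨j, hj⟩ := (AddCircle.coe_eq_zero_iff _).mp hn2
    have hq : ((n:ℚ))^2 * s = 2 * j := by
      push_cast [zsmul_eq_mul] at hj
      linarith
    rw [hm] at hq
    have expand : ((n:ℚ))^2 * (k/n + m) = n * (k + n * m) := by field_simp
    rw [expand] at hq
    have hint : (n:ℤ) * (k + n * m) = 2 * j := by exact_mod_cast hq
    have h2 : (2:ℤ) ∣ (n:ℤ) * (k + n * m) := ⟨j, hint⟩
    have hnodd : ¬ (2:ℤ) ∣ (n:ℤ) := by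
      intro hdvd
      obtain ⟨w, hw⟩ := hdvd
      obtain ⟨v, hv⟩ := hodd
      omega
    exact (Int.prime_two.dvd_mul.mp h2).resolve_left hnodd
  -- conclude
  refine ⟨(c0 : ZMod n), fun x => ?_⟩
  rw [h1 x, ← hs, ← AddCircle.coe_zsmul]
  refine key2 _ _ (x.val^2 * c0) (((c0 : ZMod n)).val * x.val ^ 2) ?_ rfl ?_
  · have hc : (k:ℚ) + n * m = 2 * c0 := by exact_mod_cast congrArg (Int.cast : ℤ → ℚ) hc0
    rw [hm, zsmul_eq_mul]
    push_cast [ZMod.natCast_val]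
    field_simp
    linear_combination (((ZMod.cast x : ℤ) : ℚ)^2) * hc
  · push_cast [ZMod.natCast_val, ZMod.cast_id]
    ring

lemma three_classes (p : ℕ) [Fact p.Prime] (hp2 : p ≠ 2) :
    ∃ rep : Fin 3 → ZMod p,
      ∀ a : ZMod p, ∃ (u : (ZMod p)ˣ) (i : Fin 3), a = (u : ZMod p)^2 * rep i := by
  have hchar : ringChar (ZMod p) ≠ 2 := by rw [ZMod.ringChar_zmod_n]; exact hp2
  obtain ⟨ν, hν⟩ := FiniteField.exists_nonsquare (F := ZMod p) hchar
  refine ⟨![0, 1, ν], fun a => ?_⟩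
  by_cases h0 : a = 0
  · exact ⟨1, 0, by simp [h0]⟩
  by_cases hsq : IsSquare a
  · obtain ⟨r, hr⟩ := hsq
    have hr0 : r ≠ 0 := by
      rintro rfl
      rw [mul_zero] at hr
      exact h0 hr
    refine ⟨Units.mk0 r hr0, 1, ?_⟩
    simp [hr, sq]
  · have hν0 : ν ≠ 0 := fun h => hν (h ▸ IsSquare.zero)
    have hsq2 : IsSquare (a * ν) := by
      have h1 : quadraticChar (ZMod p) a = -1 :=
        quadraticChar_neg_one_iff_not_isSquare.mpr hsq
      have h2 : quadraticChar (ZMod p) ν = -1 :=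
        quadraticChar_neg_one_iff_not_isSquare.mpr hν
      have h3 : quadraticChar (ZMod p) (a * ν) = 1 := by
        rw [map_mul, h1, h2]; norm_num
      exact (quadraticChar_one_iff_isSquare (mul_ne_zero h0 hν0)).mp h3
    obtain ⟨r, hr⟩ := hsq2
    have hr0 : r ≠ 0 := by
      rintro rfl
      rw [mul_zero] at hr
      exact mul_ne_zero h0 hν0 hr
    refine ⟨Units.mk0 (r * ν⁻¹) (mul_ne_zero hr0 (inv_ne_zero hν0)), 2, ?_⟩
    show a = (r * ν⁻¹)^2 * ν
    field_simp
    rw [show r ^ 2 = a * ν from by rw [sq, hr]]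

lemma isQuadraticForm_comp {A B' : Type} [AddCommGroup A] [AddCommGroup B'] (e : A ≃+ B')
    (Q : B' → AddCircle (2:ℚ)) (h : IsQuadraticForm Q) : IsQuadraticForm (fun a => Q (e a)) := by
  obtain ⟨hhom, B, h1, h2, h3⟩ := h
  refine ⟨fun m a => by show Q (e (m • a)) = _; rw [map_zsmul]; exact hhom m (e a),
    fun a b => B (e a) (e b), fun a b => h1 _ _,
    fun a b c => by show B (e (a + b)) _ = _; rw [map_add]; exact h2 (e a) (e b) (e c),
    fun a b => by show Q (e (a + b)) = _; rw [map_add]; exact h3 (e a) (e b)⟩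

/-- Let `p ≠ q` be distinct odd primes and `A` a finite abelian group of order `pq`.
Then there are at most nine isomorphism classes of quadratic forms on `A`: there are
quadratic forms `Q₁, …, Q₉` on `A` such that every quadratic form on `A` is
isomorphic to some `Qᵢ`. -/
theorem stmt_9 (p q : ℕ) (hp : p.Prime) (hq : q.Prime) (hop : Odd p) (hoq : Odd q)
    (hpq : p ≠ q) (A : Type) [AddCommGroup A] [Fintype A] (hA : Fintype.card A = p * q) :
    ∃ Qs : Fin 9 → A → AddCircle (2 : ℚ),
      (∀ i, IsQuadraticForm (Qs i)) ∧
      ∀ Q : A → AddCircle (2 : ℚ), IsQuadraticForm Q →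
        ∃ (i : Fin 9) (φ : A ≃+ A), ∀ a, Q a = Qs i (φ a) := by
  haveI : Fact p.Prime := ⟨hp⟩
  haveI : Fact q.Prime := ⟨hq⟩
  have hp2 : p ≠ 2 := by rintro rfl; exact (Nat.not_odd_iff_even.mpr even_two) hop
  have hq2 : q ≠ 2 := by rintro rfl; exact (Nat.not_odd_iff_even.mpr even_two) hoq
  have hcop : Nat.Coprime p q := (Nat.coprime_primes hp hq).mpr hpq
  haveI : NeZero (p * q) := ⟨Nat.mul_ne_zero hp.pos.ne' hq.pos.ne'⟩
  have hodd : Odd (p * q) := hop.mul hoq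
  -- `A` is cyclic
  obtain ⟨a, ha⟩ := exists_prime_addOrderOf_dvd_card (G := A) p (by rw [hA]; exact dvd_mul_right p q)
  obtain ⟨b, hb⟩ := exists_prime_addOrderOf_dvd_card (G := A) q (by rw [hA]; exact dvd_mul_left q p)
  have hab : addOrderOf (a + b) = p * q := by
    rw [AddCommute.addOrderOf_add_eq_mul_addOrderOf_of_coprime (AddCommute.all a b)
      (by rw [ha, hb]; exact hcop), ha, hb]
  have hcyc : IsAddCyclic A := isAddCyclic_of_addOrderOf_eq_card (a + b)
    (by rw [hab, Nat.card_eq_fintype_card, hA])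
  have hcard : Nat.card A = p * q := by rw [Nat.card_eq_fintype_card, hA]
  let e : A ≃+ ZMod (p * q) :=
    (zmodAddCyclicAddEquiv hcyc).symm.trans (ZMod.ringEquivCongr hcard).toAddEquiv
  -- CRT and class representatives
  let crt := ZMod.chineseRemainder hcop
  obtain ⟨repP, hrepP⟩ := three_classes p hp2
  obtain ⟨repQ, hrepQ⟩ := three_classes q hq2
  let crep : Fin 9 → ZMod (p * q) := fun k =>
    crt.symm.toRingHom (repP ⟨k.val / 3, by omega⟩, repQ ⟨k.val % 3, by omega⟩)
  refine ⟨fun k x => qcf (p * q) (crep k) (e x),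
    fun k => isQuadraticForm_comp e _ (isQuadraticForm_qcf (p * q) _), ?_⟩
  intro Q hQ
  obtain ⟨c, hc⟩ := qf_classify (p * q) hodd (fun x => Q (e.symm x))
    (isQuadraticForm_comp e.symm Q hQ)
  have hc' : ∀ x : A, Q x = qcf (p * q) c (e x) := by
    intro x
    have h := hc (e x)
    rw [AddEquiv.symm_apply_apply] at h
    exact h
  obtain ⟨up, i, hi⟩ := hrepP (crt.toRingHom c).1
  obtain ⟨uq, j, hj⟩ := hrepQ (crt.toRingHom c).2
  have hi3 : i.val < 3 := i.isLt
  have hj3 : j.val < 3 := j.isLt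
  let k : Fin 9 := ⟨3 * i.val + j.val, by omega⟩
  -- the unit
  have hpu : IsUnit (((up : ZMod p), (uq : ZMod q)) : ZMod p × ZMod q) :=
    ⟨⟨((up : ZMod p), (uq : ZMod q)), ((↑up⁻¹ : ZMod p), (↑uq⁻¹ : ZMod q)),
      by rw [Prod.mk_mul_mk, Units.mul_inv, Units.mul_inv]; rfl,
      by rw [Prod.mk_mul_mk, Units.inv_mul, Units.inv_mul]; rfl⟩, rfl⟩
  have hu : IsUnit (crt.symm.toRingHom ((up : ZMod p), (uq : ZMod q))) :=
    hpu.map crt.symm.toRingHom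
  obtain ⟨w, hw⟩ := hu
  -- key identity
  have key : c = (w : ZMod (p * q))^2 * crep k := by
    apply crt.injective
    rw [map_mul, map_pow, hw]
    have h1 : crt (crt.symm.toRingHom ((up : ZMod p), (uq : ZMod q)))
        = ((up : ZMod p), (uq : ZMod q)) := crt.apply_symm_apply _
    have h2 : crt (crep k) = (repP ⟨k.val / 3, by omega⟩, repQ ⟨k.val % 3, by omega⟩) :=
      crt.apply_symm_apply _
    rw [h1, h2]
    have hki : (⟨k.val / 3, by omega⟩ : Fin 3) = i := by
      apply Fin.ext
      show (3 * i.val + j.val) / 3 = i.val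
      omega
    have hkj : (⟨k.val % 3, by omega⟩ : Fin 3) = j := by
      apply Fin.ext
      show (3 * i.val + j.val) % 3 = j.val
      omega
    rw [hki, hkj]
    apply Prod.ext
    · show (crt.toRingHom c).1 = _
      rw [hi]; rfl
    · show (crt.toRingHom c).2 = _
      rw [hj]; rfl
  -- assemble the isomorphism
  let ψ : ZMod (p * q) ≃+ ZMod (p * q) := (AddAut.mulLeft w : AddAut (ZMod (p * q)))
  refine ⟨k, (e.trans ψ).trans e.symm, fun x => ?_⟩
  have hφ : e (((e.trans ψ).trans e.symm) x) = (w : ZMod (p * q)) * e x := by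
    simp only [AddEquiv.trans_apply, AddEquiv.apply_symm_apply]
    rfl
  rw [hc' x]
  show qcf (p * q) c (e x) = qcf (p * q) (crep k) (e (((e.trans ψ).trans e.symm) x))
  rw [hφ, qcf_unit_mul, key, mul_comm ((w : ZMod (p * q))^2) (crep k)]
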